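/- Let K and G be real symmetric n×n matrices with K positive definite, and suppose there exists a vector v ∈ ℝⁿ with vᵀGv < 0. Then the set {λ > 0 : there exists φ ≠ 0 with (K + λG)φ = 0} is nonempty and possesses a least element λ₁ (the fundamental buckling load factor). -/

import Mathlib

open Matrix
open scoped MatrixOrder

lemma aux_shift_posSemidef {n : ℕ} {A : Matrix (Fin n) (Fin n) ℝ} (hA : A.IsHermitian)
    (a : ℝ) (ha : ∀ i, a ≤ hA.eigenvalues i) : (A - a • 1).PosSemidef := by
  classical
  set U : Matrix (Fin n) (Fin n) ℝ := (hA.eigenvectorUnitary : Matrix (Fin n) (Fin n) ℝ) with hUdef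
  have hU : U * star U = 1 := Matrix.mem_unitaryGroup_iff.mp (hA.eigenvectorUnitary).2
  have hdiag : (Matrix.diagonal (fun i => hA.eigenvalues i - a)).PosSemidef :=
    Matrix.posSemidef_diagonal_iff.mpr fun i => sub_nonneg.mpr (ha i)
  have key : A - a • 1 = U * Matrix.diagonal (fun i => hA.eigenvalues i - a) * star U := by
    have hspec := hA.spectral_theorem
    rw [Unitary.conjStarAlgAut_apply] at hspec
    have hD : Matrix.diagonal (fun i => hA.eigenvalues i - a)
        = Matrix.diagonal (RCLike.ofReal ∘ hA.eigenvalues) - a • (1 : Matrix (Fin n) (Fin n) ℝ) := by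
      rw [← Matrix.diagonal_one, ← Matrix.diagonal_smul, Matrix.diagonal_sub]
      ext i j
      simp
    rw [hD, Matrix.mul_sub, Matrix.sub_mul, ← hspec, mul_smul_comm, Matrix.mul_one,
      smul_mul_assoc, hU]
  rw [key, Matrix.star_eq_conjTranspose]
  exact hdiag.mul_mul_conjTranspose_same U

/-- For real symmetric `K, G` with `K` positive definite and
some vector `v` with `vᵀGv < 0`, the set of positive buckling load factors
`{λ > 0 : ∃ φ ≠ 0, (K + λG)φ = 0}` is nonempty and has a least element `λ₁`. -/
theorem fundamental_blf_exists {n : ℕ} (K G : Matrix (Fin n) (Fin n) ℝ)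
    (hKsymm : K.IsSymm) (hGsymm : G.IsSymm) (hKpd : K.PosDef)
    (hneg : ∃ v : Fin n → ℝ, v ⬝ᵥ G.mulVec v < 0) :
    ∃ lam1 : ℝ,
      IsLeast {l : ℝ | 0 < l ∧ ∃ φ : Fin n → ℝ, φ ≠ 0 ∧ (K + l • G).mulVec φ = 0} lam1 := by
  classical
  obtain ⟨v, hv⟩ := hneg
  haveI hn : Nonempty (Fin n) := by
    by_contra h
    rw [not_nonempty_iff] at h
    rw [show v ⬝ᵥ G.mulVec v = 0 from by simp [dotProduct]] at hv
    exact lt_irrefl 0 hv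
  -- the square root of K
  set Q := CFC.sqrt K with hQdef
  have hQQ : Q * Q = K := CFC.sqrt_mul_sqrt_self K hKpd.posSemidef.nonneg
  have hQH : Q.IsHermitian := (CFC.sqrt_nonneg K).posSemidef.1
  have hdetQ : IsUnit Q.det := by
    refine isUnit_iff_ne_zero.mpr fun h => ?_
    have : K.det = 0 := by rw [← hQQ, Matrix.det_mul, h, mul_zero]
    exact hKpd.det_pos.ne' this
  have hQ1 : Q * Q⁻¹ = 1 := Matrix.mul_nonsing_inv _ hdetQ
  have hQ1' : Q⁻¹ * Q = 1 := Matrix.nonsing_inv_mul _ hdetQ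
  set A := Q⁻¹ * G * Q⁻¹ with hAdef
  have hGH : G.IsHermitian := by
    rwa [Matrix.IsHermitian, Matrix.conjTranspose_eq_transpose_of_trivial]
  have hA : A.IsHermitian := by
    have h1 : (Q⁻¹).IsHermitian := hQH.inv
    rw [Matrix.IsHermitian, hAdef, Matrix.conjTranspose_mul, Matrix.conjTranspose_mul,
      h1.eq, hGH.eq, Matrix.mul_assoc]
  have hQAQ : Q * A * Q = G := by
    rw [hAdef, ← Matrix.mul_assoc, ← Matrix.mul_assoc, hQ1, Matrix.one_mul, Matrix.mul_assoc,
      hQ1', Matrix.mul_one]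
  have hfact : ∀ l : ℝ, K + l • G = Q * (1 + l • A) * Q := by
    intro l
    rw [Matrix.mul_add, Matrix.add_mul, Matrix.mul_one, mul_smul_comm, smul_mul_assoc,
      hQQ, hQAQ]
  -- minimum eigenvalue of A
  obtain ⟨i₀, hi₀⟩ := Finite.exists_min hA.eigenvalues
  set a := hA.eigenvalues i₀ with hadef
  have hshift : (A - a • 1).PosSemidef := aux_shift_posSemidef hA a hi₀
  -- a < 0
  have ha0 : a < 0 := by
    by_contra h
    push_neg at h
    have hPSD : A.PosSemidef := hA.posSemidef_iff_eigenvalues_nonneg.mpr fun i => le_trans h (hi₀ i)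
    have h2 := hPSD.dotProduct_mulVec_nonneg (Q *ᵥ v)
    rw [star_trivial] at h2
    have h3 : (Q *ᵥ v) ⬝ᵥ A *ᵥ (Q *ᵥ v) = v ⬝ᵥ G.mulVec v := by
      have hQs : Qᵀ = Q := by
        rw [← Matrix.conjTranspose_eq_transpose_of_trivial]; exact hQH.eq
      rw [Matrix.mulVec_mulVec, ← Matrix.vecMul_transpose, hQs, dotProduct_mulVec,
        Matrix.vecMul_vecMul, ← Matrix.mul_assoc, hQAQ, ← dotProduct_mulVec]
    rw [h3] at h2
    exact absurd h2 (not_le.mpr hv)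
  have ha0' : a ≠ 0 := ne_of_lt ha0
  refine ⟨-a⁻¹, ⟨?_, ?_⟩⟩
  · -- membership
    have hl1 : (0:ℝ) < -a⁻¹ := by
      have := inv_neg''.mpr ha0
      linarith
    refine ⟨hl1, ?_⟩
    set ψ : Fin n → ℝ := ⇑(hA.eigenvectorBasis i₀) with hψdef
    have hψ0 : ψ ≠ 0 := by
      intro h
      apply hA.eigenvectorBasis.orthonormal.ne_zero i₀
      ext j
      exact congrFun h j
    have hAψ : A *ᵥ ψ = a • ψ := hA.mulVec_eigenvectorBasis i₀
    refine ⟨Q⁻¹ *ᵥ ψ, ?_, ?_⟩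
    · intro h
      apply hψ0
      have : Q *ᵥ (Q⁻¹ *ᵥ ψ) = 0 := by rw [h, Matrix.mulVec_zero]
      rwa [Matrix.mulVec_mulVec, hQ1, Matrix.one_mulVec] at this
    · rw [hfact]
      have e1 : (Q * (1 + -a⁻¹ • A) * Q) *ᵥ (Q⁻¹ *ᵥ ψ) = Q *ᵥ ((1 + -a⁻¹ • A) *ᵥ ψ) := by
        rw [Matrix.mulVec_mulVec, Matrix.mul_assoc (Q * (1 + -a⁻¹ • A)) Q Q⁻¹, hQ1,
          Matrix.mul_one, ← Matrix.mulVec_mulVec]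
      rw [e1]
      have e2 : (1 + -a⁻¹ • A) *ᵥ ψ = 0 := by
        rw [Matrix.add_mulVec, Matrix.one_mulVec, Matrix.smul_mulVec, hAψ, smul_smul]
        have h5 : -a⁻¹ * a = -1 := by field_simp
        rw [h5]
        ext j
        simp
      rw [e2, Matrix.mulVec_zero]
  · -- lower bound
    rintro l ⟨hl, φ, hφ0, hφ⟩
    set ψ := Q *ᵥ φ with hψdef
    have hψ0 : ψ ≠ 0 := by
      intro h
      apply hφ0
      have : Q⁻¹ *ᵥ (Q *ᵥ φ) = 0 := by rw [← hψdef, h, Matrix.mulVec_zero]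
      rwa [Matrix.mulVec_mulVec, hQ1', Matrix.one_mulVec] at this
    have hkey : (1 + l • A) *ᵥ ψ = 0 := by
      have h1 : Q⁻¹ *ᵥ ((K + l • G) *ᵥ φ) = 0 := by rw [hφ, Matrix.mulVec_zero]
      rw [hfact, Matrix.mulVec_mulVec] at h1
      rw [show Q⁻¹ * (Q * (1 + l • A) * Q) = (1 + l • A) * Q from by
        rw [← Matrix.mul_assoc, ← Matrix.mul_assoc, hQ1', Matrix.one_mul]] at h1
      rw [hψdef, Matrix.mulVec_mulVec]
      exact h1
    have hAψ : ψ ⬝ᵥ A *ᵥ ψ = -l⁻¹ * (ψ ⬝ᵥ ψ) := by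
      have h2 : ψ + l • (A *ᵥ ψ) = 0 := by
        rw [← hkey, Matrix.add_mulVec, Matrix.one_mulVec, Matrix.smul_mulVec]
      have h3 : A *ᵥ ψ = (-l⁻¹) • ψ := by
        have hl' : l ≠ 0 := ne_of_gt hl
        have := congrArg (fun x => l⁻¹ • x) h2
        simp only [smul_add, smul_smul, inv_mul_cancel₀ hl', one_smul, smul_zero] at this
        have h4 : A *ᵥ ψ = -(l⁻¹ • ψ) := by
          rw [eq_neg_iff_add_eq_zero, add_comm]
          exact this
        rw [h4, neg_smul]
      rw [h3, dotProduct_smul, smul_eq_mul]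
    have hs : 0 < ψ ⬝ᵥ ψ := by
      have hnn : 0 ≤ ψ ⬝ᵥ ψ := Finset.sum_nonneg fun i _ => mul_self_nonneg _
      rcases lt_or_eq_of_le hnn with h | h
      · exact h
      · exact absurd (dotProduct_self_eq_zero.mp h.symm) hψ0
    have hpsd := hshift.dotProduct_mulVec_nonneg ψ
    rw [star_trivial, Matrix.sub_mulVec, dotProduct_sub, Matrix.smul_mulVec,
      Matrix.one_mulVec, dotProduct_smul, smul_eq_mul, hAψ] at hpsd
    -- hpsd : 0 ≤ -l⁻¹ * (ψ⬝ψ) - a * (ψ⬝ψ)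
    have hle : a ≤ -l⁻¹ := by nlinarith
    have hinv : l * l⁻¹ = 1 := mul_inv_cancel₀ (ne_of_gt hl)
    have hprod : a * l ≤ -1 := by nlinarith
    have hainv : a * a⁻¹ = 1 := mul_inv_cancel₀ ha0'
    nlinarith
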